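/- Let C and C' be n×n real matrices. Assume (i) C and C' agree in inequality C[−|n) ≤ C'[−|n) (entrywise inequality on all columns except the last) and the row-sum vector of C' entrywise dominates the row-sum vector of C; (ii) C' has a rooted eigenvector v' for a real eigenvalue λ'; (iii) C has a nonnegative left eigenvector v^T for a real eigenvalue λ; and (iv) v^T v' > 0. Then λ ≤ λ'. -/

import Mathlib

/-- A vector is rooted if every entry is at least the last entry, which is nonnegative. -/
def Rooted {n : ℕ} (v : Fin (n + 1) → ℝ) : Prop :=
  0 ≤ v (Fin.last n) ∧ ∀ j, v (Fin.last n) ≤ v j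

theorem stmt_5 {n : ℕ} (C C' : Matrix (Fin (n + 1)) (Fin (n + 1)) ℝ)
    (v v' : Fin (n + 1) → ℝ) (lam lam' : ℝ)
    (h1 : ∀ i j, j ≠ Fin.last n → C i j ≤ C' i j)
    (h1' : ∀ i, ∑ j, C i j ≤ ∑ j, C' i j)
    (h2 : Rooted v') (h2' : v' ≠ 0) (h2e : C'.mulVec v' = lam' • v')
    (h3 : ∀ i, 0 ≤ v i) (h3e : Matrix.vecMul v C = lam • v)
    (h4 : 0 < dotProduct v v') :
    lam ≤ lam' := by
  obtain ⟨hv0, hvj⟩ := h2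
  -- key: for each i, (C.mulVec v') i ≤ (C'.mulVec v') i
  have key : ∀ i, C.mulVec v' i ≤ C'.mulVec v' i := by
    intro i
    simp only [Matrix.mulVec, dotProduct]
    have e1 : ∀ (M : Matrix (Fin (n+1)) (Fin (n+1)) ℝ),
        ∑ j, M i j * v' j
          = (∑ j, M i j * (v' j - v' (Fin.last n))) + (∑ j, M i j) * v' (Fin.last n) := by
      intro M
      rw [Finset.sum_mul, ← Finset.sum_add_distrib]
      congr 1; ext j; ring
    rw [e1 C, e1 C']
    apply add_le_add
    · apply Finset.sum_le_sum
      intro j _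
      rcases eq_or_ne j (Fin.last n) with h | h
      · simp [h]
      · exact mul_le_mul_of_nonneg_right (h1 i j h) (by linarith [hvj j])
    · exact mul_le_mul_of_nonneg_right (h1' i) hv0
  have hdot : dotProduct v (C.mulVec v') ≤ dotProduct v (C'.mulVec v') := by
    apply Finset.sum_le_sum
    intro i _
    exact mul_le_mul_of_nonneg_left (key i) (h3 i)
  have lhs : dotProduct v (C.mulVec v') = lam * dotProduct v v' := by
    rw [Matrix.dotProduct_mulVec, h3e, smul_dotProduct, smul_eq_mul]
  have rhs : dotProduct v (C'.mulVec v') = lam' * dotProduct v v' := by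
    rw [h2e, dotProduct_smul, smul_eq_mul]
  rw [lhs, rhs] at hdot
  exact le_of_mul_le_mul_right hdot h4
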